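/- Let K be a field, n a natural number, and X an invertible n×n matrix over K. Then for every k with 1 ≤ k ≤ n: (charpoly (adjugate X)).coeff (n − k) = (−1)^n * (det X)^(k − 1) * (charpoly X).coeff k. -/

import Mathlib

open Polynomial Matrix

lemma coeff_comp_C_mul_X {K : Type*} [CommRing K] (d : K) (p : K[X]) (k : ℕ) :
    (p.comp (C d * X)).coeff k = d ^ k * p.coeff k := by
  induction p using Polynomial.induction_on' with
  | add p q hp hq => simp [add_comp, hp, hq, mul_add]
  | monomial j a =>
      rw [← C_mul_X_pow_eq_monomial, mul_comp, C_comp, pow_comp, X_comp, mul_pow,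
        ← C_pow, ← mul_assoc, ← C_mul]
      simp only [coeff_C_mul, coeff_X_pow]
      by_cases h : k = j <;> simp [h, mul_comm]

theorem charpoly_adjugate_coeff (K : Type*) [Field K] (n : ℕ)
    (X : Matrix (Fin n) (Fin n) K) (hX : IsUnit X) :
    ∀ k : ℕ, 1 ≤ k → k ≤ n →
      (X.adjugate).charpoly.coeff (n - k)
        = (-1 : K) ^ n * X.det ^ (k - 1) * X.charpoly.coeff k := by
  intro k hk1 hkn
  set d := X.det with hd_def
  have hd : d ≠ 0 := by
    have := (Matrix.isUnit_iff_isUnit_det X).mp hX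
    exact this.ne_zero
  -- step 1: coefficient of reverse
  have h1 : (X.adjugate).charpoly.coeff (n - k)
      = ((X.adjugate).charpoly.reverse).coeff k := by
    rw [Polynomial.coeff_reverse, Matrix.charpoly_natDegree_eq_dim,
      Fintype.card_fin, Polynomial.revAt_le hkn]
  -- step 2: the key polynomial identity
  have key : Polynomial.C d * (X.adjugate).charpolyRev
      = Polynomial.C ((-1 : K) ^ n) * (X.charpoly.comp (Polynomial.C d * Polynomial.X)) := by
    have hmul : (X.adjugate.map Polynomial.C) * (X.map Polynomial.C)
        = Polynomial.C d • (1 : Matrix (Fin n) (Fin n) K[X]) := by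
      rw [← Matrix.map_mul, Matrix.adjugate_mul]
      ext i j
      by_cases h : i = j <;> simp [h, Matrix.one_apply, hd_def]
    have hdetX : (X.map Polynomial.C).det = Polynomial.C d := by
      have := (RingHom.map_det (Polynomial.C : K →+* K[X]) X).symm
      simpa [RingHom.mapMatrix_apply] using this
    have hcomp : X.charpoly.comp (Polynomial.C d * Polynomial.X)
        = ((X.charmatrix).map (Polynomial.aeval (Polynomial.C d * Polynomial.X))).det := by
      have := AlgHom.map_det (Polynomial.aeval (Polynomial.C d * Polynomial.X) : K[X] →ₐ[K] K[X]) X.charmatrix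
      rw [AlgHom.mapMatrix_apply] at this
      rw [← this]
      simp [Matrix.charpoly, Polynomial.aeval_def, Polynomial.eval₂_eq_eval_map,
        Polynomial.comp]
    have hmap : (X.charmatrix).map (Polynomial.aeval (Polynomial.C d * Polynomial.X))
        = Matrix.scalar (Fin n) (Polynomial.C d * Polynomial.X) - X.map Polynomial.C := by
      ext i j
      by_cases h : i = j <;>
        simp [Matrix.charmatrix_apply, h, Matrix.scalar_apply, Matrix.diagonal_apply,
          Matrix.sub_apply]
    have : (1 - (Polynomial.X : K[X]) • X.adjugate.map Polynomial.C) * (X.map Polynomial.C)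
        = -(Matrix.scalar (Fin n) (Polynomial.C d * Polynomial.X) - X.map Polynomial.C) := by
      rw [sub_mul, one_mul, Matrix.smul_mul, hmul, neg_sub]
      congr 1
      ext i j : 2
      by_cases h : i = j <;>
        simp only [Matrix.smul_apply, Matrix.scalar_apply, Matrix.diagonal_apply,
          Matrix.one_apply, h, if_true, if_false, if_neg, smul_eq_mul] <;>
        simp [h]
    calc Polynomial.C d * (X.adjugate).charpolyRev
        = (X.adjugate).charpolyRev * (X.map Polynomial.C).det := by rw [hdetX, mul_comm]
      _ = ((1 - (Polynomial.X : K[X]) • X.adjugate.map Polynomial.C) * (X.map Polynomial.C)).det := by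
          rw [Matrix.charpolyRev, ← Matrix.det_mul]
      _ = Polynomial.C ((-1 : K) ^ n) * (X.charpoly.comp (Polynomial.C d * Polynomial.X)) := by
          rw [this, Matrix.det_neg, hcomp, hmap, Fintype.card_fin]
          simp
  -- step 3: take coefficients
  have h2 := congrArg (fun p => Polynomial.coeff p k) key
  simp only [Polynomial.coeff_C_mul, coeff_comp_C_mul_X] at h2
  rw [h1, Matrix.reverse_charpoly]
  have hdk : d ^ k = d * d ^ (k - 1) := by
    rw [← pow_succ', Nat.sub_add_cancel hk1]
  rw [hdk] at h2
  apply mul_left_cancel₀ hd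
  rw [h2]; ring
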